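/- Let ξ > 0 be real, let 0 < ε < 1, and let (a_n)_{n≥1} be a sequence of reals with 0 ≤ a_n < 1 − ε for all n ≥ 1. Then the set of real numbers α > 1 such that a_n ≤ {ξ α^n} ≤ a_n + ε for every n ≥ 1 has Hausdorff dimension 1. -/

import Mathlib

open MeasureTheory Set
set_option maxHeartbeats 1000000
set_option linter.unusedSectionVars false
set_option linter.unusedTactic false

namespace Stmt6Aux

/-- chord bound: `y^(m+1) - x^(m+1) ≤ (m+1) R^m (y-x)` for `0 ≤ x ≤ y ≤ R`. -/
lemma pow_sub_pow_le {x y R : ℝ} (hx : 0 ≤ x) (hxy : x ≤ y) (hyR : y ≤ R) :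
    ∀ m : ℕ, y ^ (m+1) - x ^ (m+1) ≤ (m+1) * R ^ m * (y - x) := by
  intro m
  induction m with
  | zero => simp
  | succ m ih =>
    have hy : 0 ≤ y := hx.trans hxy
    have hR : 0 ≤ R := hy.trans hyR
    have h1 : x ^ (m+1) ≤ R ^ (m+1) := pow_le_pow_left₀ hx (hxy.trans hyR) _
    have h2 : (0:ℝ) ≤ y ^ (m+1) - x ^ (m+1) := by
      have := pow_le_pow_left₀ hx hxy (m+1); linarith
    have hRm : (0:ℝ) ≤ R ^ m := pow_nonneg hR m
    have key : y * (y ^ (m+1) - x ^ (m+1)) ≤ R * ((m+1) * R ^ m * (y - x)) := by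
      have hA : y * (y ^ (m+1) - x ^ (m+1)) ≤ R * (y ^ (m+1) - x ^ (m+1)) :=
        mul_le_mul_of_nonneg_right hyR h2
      have hB : R * (y ^ (m+1) - x ^ (m+1)) ≤ R * ((m+1) * R ^ m * (y - x)) :=
        mul_le_mul_of_nonneg_left ih hR
      linarith
    have key2 : x ^ (m+1) * (y - x) ≤ R ^ (m+1) * (y - x) :=
      mul_le_mul_of_nonneg_right h1 (sub_nonneg.2 hxy)
    have expand : y ^ (m+2) - x ^ (m+2)
        = y * (y ^ (m+1) - x ^ (m+1)) + x ^ (m+1) * (y - x) := by ring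
    have : y ^ (m+2) - x ^ (m+2) ≤ (m+2) * R ^ (m+1) * (y - x) := by
      rw [expand]
      calc y * (y ^ (m+1) - x ^ (m+1)) + x ^ (m+1) * (y - x)
          ≤ R * ((m+1) * R ^ m * (y - x)) + R ^ (m+1) * (y - x) := by linarith
        _ = (m+2) * R ^ (m+1) * (y - x) := by ring
    calc y ^ (m+1+1) - x ^ (m+1+1) ≤ (m+2) * R ^ (m+1) * (y - x) := this
      _ = (↑(m+1) + 1) * R ^ (m+1) * (y - x) := by push_cast; ring

lemma chord_lower {u v : ℝ} (hu : 0 ≤ u) (huv : u ≤ v) (m : ℕ) :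
    u * (v ^ (m+1) - u ^ (m+1)) ≤ v ^ (m+2) - u ^ (m+2) := by
  have hv : 0 ≤ v := hu.trans huv
  have h1 : u * v ^ (m+1) ≤ v ^ (m+2) := by
    calc u * v ^ (m+1) ≤ v * v ^ (m+1) := by
          exact mul_le_mul_of_nonneg_right huv (pow_nonneg hv _)
      _ = v ^ (m+2) := by ring
  have h2 : u ^ (m+2) = u * u ^ (m+1) := by ring
  nlinarith

end Stmt6Aux

namespace Stmt6Aux

/-- left endpoint of the interval at level `n+1` with integer part `k`. -/
noncomputable def lep (ξ : ℝ) (a : ℕ → ℝ) (n : ℕ) (k : ℤ) : ℝ :=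
  (((k : ℝ) + a (n+1)) / ξ) ^ (((n+1 : ℕ) : ℝ))⁻¹

noncomputable def rep (ξ ε : ℝ) (a : ℕ → ℝ) (n : ℕ) (k : ℤ) : ℝ :=
  (((k : ℝ) + a (n+1) + ε) / ξ) ^ (((n+1 : ℕ) : ℝ))⁻¹

variable {M : ℕ}

noncomputable def kseq (ξ : ℝ) (a : ℕ → ℝ) (T : ℕ) (c : ℕ → Fin M) : ℕ → ℤ
  | 0 => ⌈ξ * T⌉
  | (n+1) => ⌈ξ * (lep ξ a n (kseq ξ a T c n)) ^ (n + 2)⌉ + (c n : ℤ)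

noncomputable def u (ξ : ℝ) (a : ℕ → ℝ) (T : ℕ) (c : ℕ → Fin M) (n : ℕ) : ℝ :=
  lep ξ a n (kseq ξ a T c n)

noncomputable def v (ξ ε : ℝ) (a : ℕ → ℝ) (T : ℕ) (c : ℕ → Fin M) (n : ℕ) : ℝ :=
  rep ξ ε a n (kseq ξ a T c n)

section Main

variable {ξ ε : ℝ} {a : ℕ → ℝ} {T L : ℕ}
variable (hξ : 0 < ξ) (hε0 : 0 < ε) (hε1 : ε < 1)
  (ha : ∀ n : ℕ, 1 ≤ n → 0 ≤ a n ∧ a n < 1 - ε)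
  (hL : 2 ≤ ξ * L) (hM1 : (M:ℝ) + 1 ≤ ε * T) (hM2 : 2 ≤ M) (hT2 : 2 ≤ T)

include hξ hε0 hε1 ha hL hM1 hM2 hT2

/-- the main invariant. -/
lemma inv_step (c : ℕ → Fin M) : ∀ n : ℕ,
    ((T:ℝ) ≤ u ξ a T c n ∧ v ξ ε a T c n ≤ T + L ∧
     ξ * (u ξ a T c n) ^ (n+1) = kseq ξ a T c n + a (n+1) ∧
     ξ * (v ξ ε a T c n) ^ (n+1) = (kseq ξ a T c n + a (n+1)) + ε) ∧
    (u ξ a T c n ≤ u ξ a T c (n+1) ∧ v ξ ε a T c (n+1) ≤ v ξ ε a T c n) := by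
  have hT0 : (0:ℝ) < T := by positivity
  have base : (T:ℝ) ≤ u ξ a T c 0 ∧ v ξ ε a T c 0 ≤ T + L ∧
      ξ * (u ξ a T c 0) ^ (0+1) = kseq ξ a T c 0 + a (0+1) ∧
      ξ * (v ξ ε a T c 0) ^ (0+1) = (kseq ξ a T c 0 + a (0+1)) + ε := by
    have ha1 := ha 1 le_rfl
    have hk0 : kseq ξ a T c 0 = ⌈ξ * T⌉ := rfl
    have hceil : ξ * T ≤ (⌈ξ * T⌉ : ℝ) := Int.le_ceil _
    have hceil2 : (⌈ξ * T⌉ : ℝ) < ξ * T + 1 := Int.ceil_lt_add_one _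
    have hpos : (0:ℝ) < (⌈ξ * T⌉ : ℝ) + a 1 := by nlinarith
    have hu0 : u ξ a T c 0 = ((⌈ξ * T⌉ : ℝ) + a 1) / ξ := by
      show lep ξ a 0 ⌈ξ * T⌉ = _
      unfold lep
      norm_num
    have hv0 : v ξ ε a T c 0 = ((⌈ξ * T⌉ : ℝ) + a 1 + ε) / ξ := by
      show rep ξ ε a 0 ⌈ξ * T⌉ = _
      unfold rep
      norm_num
    refine ⟨?_, ?_, ?_, ?_⟩
    · rw [hu0, le_div_iff₀ hξ]; nlinarith
    · rw [hv0, div_le_iff₀ hξ]; nlinarith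
    · rw [hu0, hk0, zero_add, pow_one]; field_simp
    · rw [hv0, hk0, zero_add, pow_one]; field_simp
  -- step
  have step : ∀ n : ℕ, ((T:ℝ) ≤ u ξ a T c n ∧ v ξ ε a T c n ≤ T + L ∧
      ξ * (u ξ a T c n) ^ (n+1) = kseq ξ a T c n + a (n+1) ∧
      ξ * (v ξ ε a T c n) ^ (n+1) = (kseq ξ a T c n + a (n+1)) + ε) →
      (((T:ℝ) ≤ u ξ a T c (n+1) ∧ v ξ ε a T c (n+1) ≤ T + L ∧
      ξ * (u ξ a T c (n+1)) ^ (n+2) = kseq ξ a T c (n+1) + a (n+2) ∧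
      ξ * (v ξ ε a T c (n+1)) ^ (n+2) = (kseq ξ a T c (n+1) + a (n+2)) + ε) ∧
      (u ξ a T c n ≤ u ξ a T c (n+1) ∧ v ξ ε a T c (n+1) ≤ v ξ ε a T c n)) := by
    rintro n ⟨h1, h2, h3, h4⟩
    set U := u ξ a T c n with hU
    set V := v ξ ε a T c n with hV
    have hU0 : (0:ℝ) < U := lt_of_lt_of_le hT0 h1
    have hVnn : (0:ℝ) ≤ V := by
      have hb : (0:ℝ) ≤ ((kseq ξ a T c n : ℝ) + a (n+1) + ε) := by
        nlinarith [pow_pos hU0 (n+1), h3]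
      rw [hV]
      show (0:ℝ) ≤ rep ξ ε a n (kseq ξ a T c n)
      unfold rep
      exact Real.rpow_nonneg (div_nonneg hb hξ.le) _
    have hUV : U < V := by
      have hpow : U ^ (n+1) < V ^ (n+1) := by
        have : ξ * U ^ (n+1) < ξ * V ^ (n+1) := by rw [h3, h4]; linarith
        exact lt_of_mul_lt_mul_left this hξ.le
      by_contra hc
      push_neg at hc
      exact absurd (pow_le_pow_left₀ hVnn hc (n+1)) (not_le.2 hpow)
    have hV0 : (0:ℝ) < V := hU0.trans hUV
    have hanext := ha (n+2) (by omega)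
    -- range growth
    have hgrow : ξ * U ^ (n+2) + ((M:ℝ) + 1) ≤ ξ * V ^ (n+2) := by
      have hch := chord_lower hU0.le hUV.le n
      have : U * (ξ * V ^ (n+1) - ξ * U ^ (n+1)) ≤ ξ * (V ^ (n+2) - U ^ (n+2)) := by
        have := mul_le_mul_of_nonneg_left hch hξ.le
        nlinarith
      have hrange : ξ * V ^ (n+1) - ξ * U ^ (n+1) = ε := by rw [h3, h4]; ring
      rw [hrange] at this
      have hUe : (M:ℝ) + 1 ≤ U * ε := by
        calc (M:ℝ) + 1 ≤ ε * T := hM1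
          _ ≤ U * ε := by nlinarith
      nlinarith
    -- the new integer part
    have hknew : kseq ξ a T c (n+1) = ⌈ξ * U ^ (n+2)⌉ + (c n : ℤ) := rfl
    have hceil : ξ * U ^ (n+2) ≤ (⌈ξ * U ^ (n+2)⌉ : ℝ) := Int.le_ceil _
    have hceil2 : (⌈ξ * U ^ (n+2)⌉ : ℝ) < ξ * U ^ (n+2) + 1 := Int.ceil_lt_add_one _
    have hcM : ((c n : ℤ) : ℝ) ≤ (M:ℝ) - 1 := by
      have := (c n).isLt
      have : ((c n : ℕ) : ℝ) ≤ (M : ℝ) - 1 := by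
        have h' : (c n : ℕ) + 1 ≤ M := this
        have := Nat.cast_le (α := ℝ) |>.2 h'
        push_cast at this
        linarith
      simpa using this
    have hc0 : (0:ℝ) ≤ ((c n : ℤ) : ℝ) := by exact_mod_cast Int.ofNat_nonneg _
    have hKR : ((kseq ξ a T c (n+1) : ℤ) : ℝ) = (⌈ξ * U ^ (n+2)⌉ : ℝ) + ((c n : ℤ) : ℝ) := by
      rw [hknew]; push_cast; ring
    -- key inequalities on the new target interval
    have hlow : ξ * U ^ (n+2) ≤ (kseq ξ a T c (n+1) : ℝ) + a (n+2) := by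
      rw [hKR]; nlinarith [hanext.1]
    have hhigh : (kseq ξ a T c (n+1) : ℝ) + a (n+2) + ε ≤ ξ * V ^ (n+2) := by
      rw [hKR]
      have : a (n+2) + ε ≤ 1 := by nlinarith [hanext.2]
      nlinarith
    have hposnew : (0:ℝ) < (kseq ξ a T c (n+1) : ℝ) + a (n+2) := by
      have : (0:ℝ) < ξ * U ^ (n+2) := by positivity
      linarith
    -- rpow facts
    have hne : (n+2 : ℕ) ≠ 0 := by omega
    have hdivpos : 0 ≤ ((kseq ξ a T c (n+1) : ℝ) + a (n+2)) / ξ := by positivity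
    have hdivpos' : 0 ≤ ((kseq ξ a T c (n+1) : ℝ) + a (n+2) + ε) / ξ := by positivity
    have hueq : ξ * (u ξ a T c (n+1)) ^ (n+2) = kseq ξ a T c (n+1) + a (n+2) := by
      show ξ * (lep ξ a (n+1) (kseq ξ a T c (n+1))) ^ (n+2) = _
      unfold lep
      rw [show ((n+1)+1 : ℕ) = (n+2 : ℕ) by omega]
      rw [Real.rpow_inv_natCast_pow hdivpos hne]
      field_simp
    have hveq : ξ * (v ξ ε a T c (n+1)) ^ (n+2) = (kseq ξ a T c (n+1) + a (n+2)) + ε := by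
      show ξ * (rep ξ ε a (n+1) (kseq ξ a T c (n+1))) ^ (n+2) = _
      unfold rep
      rw [show ((n+1)+1 : ℕ) = (n+2 : ℕ) by omega]
      rw [Real.rpow_inv_natCast_pow hdivpos' hne]
      field_simp
    -- nesting
    have hmono : u ξ a T c (n+1) = (((kseq ξ a T c (n+1) : ℝ) + a (n+2)) / ξ) ^ (((n+2 : ℕ):ℝ))⁻¹ := by
      show lep ξ a (n+1) _ = _
      unfold lep
      norm_num [show (n+1+1) = n+2 from rfl]
    have hmono' : v ξ ε a T c (n+1) = (((kseq ξ a T c (n+1) : ℝ) + a (n+2) + ε) / ξ) ^ (((n+2 : ℕ):ℝ))⁻¹ := by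
      show rep ξ ε a (n+1) _ = _
      unfold rep
      norm_num [show (n+1+1) = n+2 from rfl]
    have hUle : U ≤ u ξ a T c (n+1) := by
      have hU' : U = (U ^ (n+2)) ^ (((n+2 : ℕ):ℝ))⁻¹ :=
        (Real.pow_rpow_inv_natCast hU0.le hne).symm
      rw [hU', hmono]
      apply Real.rpow_le_rpow (by positivity) _ (by positivity)
      rw [le_div_iff₀ hξ]
      nlinarith
    have hVge : v ξ ε a T c (n+1) ≤ V := by
      have hV' : V = (V ^ (n+2)) ^ (((n+2 : ℕ):ℝ))⁻¹ :=
        (Real.pow_rpow_inv_natCast hV0.le hne).symm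
      rw [hV', hmono']
      apply Real.rpow_le_rpow (by positivity) _ (by positivity)
      rw [div_le_iff₀ hξ]
      nlinarith
    exact ⟨⟨h1.trans hUle, hVge.trans h2, hueq, hveq⟩, hUle, hVge⟩
  intro n
  induction n with
  | zero => exact ⟨base, (step 0 base).2⟩
  | succ n ih => exact ⟨(step n ih.1).1, (step (n+1) (step n ih.1).1).2⟩

end Main

end Stmt6Aux

namespace Stmt6Aux

section Main2

variable {M : ℕ} {ξ ε : ℝ} {a : ℕ → ℝ} {T L : ℕ}

noncomputable def afun (ξ : ℝ) (a : ℕ → ℝ) (T : ℕ) (c : ℕ → Fin M) : ℝ :=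
  ⨆ n, u ξ a T c n

variable (hξ : 0 < ξ) (hε0 : 0 < ε) (hε1 : ε < 1)
  (ha : ∀ n : ℕ, 1 ≤ n → 0 ≤ a n ∧ a n < 1 - ε)
  (hL : 2 ≤ ξ * L) (hM1 : (M:ℝ) + 1 ≤ ε * T) (hM2 : 2 ≤ M) (hT2 : 2 ≤ T)

include hξ hε0 hε1 ha hL hM1 hM2 hT2

lemma u_mono (c : ℕ → Fin M) : Monotone (u ξ a T c) :=
  monotone_nat_of_le_succ fun n => (inv_step hξ hε0 hε1 ha hL hM1 hM2 hT2 c n).2.1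

lemma v_anti (c : ℕ → Fin M) : Antitone (v ξ ε a T c) :=
  antitone_nat_of_succ_le fun n => (inv_step hξ hε0 hε1 ha hL hM1 hM2 hT2 c n).2.2

lemma u_lt_v (c : ℕ → Fin M) (n : ℕ) : u ξ a T c n < v ξ ε a T c n := by
  obtain ⟨⟨h1, h2, h3, h4⟩, _⟩ := inv_step hξ hε0 hε1 ha hL hM1 hM2 hT2 c n
  have hT0 : (0:ℝ) < T := by positivity
  have hU0 : (0:ℝ) < u ξ a T c n := lt_of_lt_of_le hT0 h1
  have hpow : (u ξ a T c n) ^ (n+1) < (v ξ ε a T c n) ^ (n+1) := by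
    have : ξ * (u ξ a T c n) ^ (n+1) < ξ * (v ξ ε a T c n) ^ (n+1) := by
      rw [h3, h4]; linarith
    exact lt_of_mul_lt_mul_left this hξ.le
  by_contra hc
  push_neg at hc
  have hVnn : (0:ℝ) ≤ v ξ ε a T c n := by
    show (0:ℝ) ≤ rep ξ ε a n (kseq ξ a T c n)
    unfold rep
    apply Real.rpow_nonneg
    apply div_nonneg _ hξ.le
    nlinarith [pow_pos hU0 (n+1), h3]
  exact absurd (pow_le_pow_left₀ hVnn hc (n+1)) (not_le.2 hpow)

lemma u_le_v (c : ℕ → Fin M) (m n : ℕ) : u ξ a T c m ≤ v ξ ε a T c n := by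
  rcases le_total m n with h | h
  · exact (u_mono hξ hε0 hε1 ha hL hM1 hM2 hT2 c h).trans
      (u_lt_v hξ hε0 hε1 ha hL hM1 hM2 hT2 c n).le
  · exact (u_lt_v hξ hε0 hε1 ha hL hM1 hM2 hT2 c m).le.trans
      (v_anti hξ hε0 hε1 ha hL hM1 hM2 hT2 c h)

lemma afun_mem (c : ℕ → Fin M) (n : ℕ) :
    u ξ a T c n ≤ afun ξ a T c ∧ afun ξ a T c ≤ v ξ ε a T c n := by
  have hbdd : BddAbove (Set.range (u ξ a T c)) :=
    ⟨v ξ ε a T c 0, by rintro x ⟨m, rfl⟩; exact u_le_v hξ hε0 hε1 ha hL hM1 hM2 hT2 c m 0⟩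
  constructor
  · exact le_ciSup hbdd n
  · exact ciSup_le fun m => u_le_v hξ hε0 hε1 ha hL hM1 hM2 hT2 c m n

lemma afun_in_set (c : ℕ → Fin M) :
    1 < afun ξ a T c ∧ ∀ n : ℕ, 1 ≤ n →
      a n ≤ Int.fract (ξ * (afun ξ a T c) ^ n) ∧ Int.fract (ξ * (afun ξ a T c) ^ n) ≤ a n + ε := by
  have hT0 : (0:ℝ) < T := by positivity
  have key : ∀ n : ℕ, (kseq ξ a T c n : ℝ) + a (n+1) ≤ ξ * (afun ξ a T c) ^ (n+1) ∧
      ξ * (afun ξ a T c) ^ (n+1) ≤ (kseq ξ a T c n : ℝ) + a (n+1) + ε := by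
    intro n
    obtain ⟨⟨h1, h2, h3, h4⟩, _⟩ := inv_step hξ hε0 hε1 ha hL hM1 hM2 hT2 c n
    obtain ⟨hml, hmr⟩ := afun_mem hξ hε0 hε1 ha hL hM1 hM2 hT2 c n
    have hu0 : (0:ℝ) ≤ u ξ a T c n := le_trans hT0.le h1
    constructor
    · rw [← h3]
      have := pow_le_pow_left₀ hu0 hml (n+1)
      nlinarith
    · rw [← h4]
      have := pow_le_pow_left₀ (hu0.trans hml) hmr (n+1)
      nlinarith
  have halpha : (T:ℝ) ≤ afun ξ a T c :=
    le_trans (inv_step hξ hε0 hε1 ha hL hM1 hM2 hT2 c 0).1.1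
      (afun_mem hξ hε0 hε1 ha hL hM1 hM2 hT2 c 0).1
  have h2T : (2:ℝ) ≤ T := by exact_mod_cast hT2
  refine ⟨by linarith, ?_⟩
  intro n hn
  obtain ⟨m, rfl⟩ : ∃ m, n = m + 1 := ⟨n - 1, by omega⟩
  obtain ⟨hl, hr⟩ := key m
  have ham := ha (m+1) (by omega)
  have hfl : ⌊ξ * (afun ξ a T c) ^ (m+1)⌋ = kseq ξ a T c m := by
    rw [Int.floor_eq_iff]
    constructor
    · linarith [ham.1]
    · push_cast
      linarith [ham.2]
  rw [Int.fract]
  rw [hfl]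
  constructor
  · linarith
  · linarith

lemma kseq_congr (c c' : ℕ → Fin M) (n : ℕ) (h : ∀ m < n, c m = c' m) :
    ∀ m ≤ n, kseq ξ a T c m = kseq ξ a T c' m := by
  intro m hm
  induction m with
  | zero => rfl
  | succ m ih =>
    have hkm : kseq ξ a T c m = kseq ξ a T c' m := ih (by omega)
    show ⌈ξ * (lep ξ a m (kseq ξ a T c m)) ^ (m + 2)⌉ + ((c m : ℕ) : ℤ) = _
    rw [hkm, h m (by omega)]
    rfl

/-- separation: if the digits first differ at index `n`, the limit points are far apart. -/
lemma separation (c c' : ℕ → Fin M) (n : ℕ) (h : ∀ m < n, c m = c' m) (hne : c n ≠ c' n) :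
    (1 - ε) / (ξ * (n+2) * ((T:ℝ) + L) ^ (n+1)) ≤ |afun ξ a T c - afun ξ a T c'| := by
  have hT0 : (0:ℝ) < T := by positivity
  have hkn : kseq ξ a T c n = kseq ξ a T c' n :=
    kseq_congr hξ hε0 hε1 ha hL hM1 hM2 hT2 c c' n h n le_rfl
  have hun : u ξ a T c n = u ξ a T c' n := by
    show lep ξ a n (kseq ξ a T c n) = lep ξ a n (kseq ξ a T c' n)
    rw [hkn]
  have hkdiff : kseq ξ a T c (n+1) ≠ kseq ξ a T c' (n+1) := by
    show ⌈ξ * (lep ξ a n (kseq ξ a T c n)) ^ (n + 2)⌉ + ((c n : ℕ) : ℤ) ≠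
      ⌈ξ * (lep ξ a n (kseq ξ a T c' n)) ^ (n + 2)⌉ + ((c' n : ℕ) : ℤ)
    rw [hkn]
    intro hcon
    apply hne
    have : ((c n : ℕ) : ℤ) = ((c' n : ℕ) : ℤ) := by omega
    have : (c n : ℕ) = (c' n : ℕ) := by exact_mod_cast this
    exact Fin.ext this
  -- symmetric one-sided bound
  have onesided : ∀ d d' : ℕ → Fin M, kseq ξ a T d (n+1) < kseq ξ a T d' (n+1) →
      (1 - ε) / (ξ * (n+2) * ((T:ℝ) + L) ^ (n+1)) ≤ afun ξ a T d' - afun ξ a T d := by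
    intro d d' hlt
    obtain ⟨⟨g1, g2, g3, g4⟩, _⟩ := inv_step hξ hε0 hε1 ha hL hM1 hM2 hT2 d (n+1)
    obtain ⟨⟨f1, f2, f3, f4⟩, _⟩ := inv_step hξ hε0 hε1 ha hL hM1 hM2 hT2 d' (n+1)
    set B := v ξ ε a T d (n+1) with hB
    set B' := u ξ a T d' (n+1) with hB'
    have hstep : (kseq ξ a T d (n+1) : ℝ) + 1 ≤ (kseq ξ a T d' (n+1) : ℝ) := by
      exact_mod_cast hlt
    have hFF : ξ * B ^ (n+2) + (1 - ε) ≤ ξ * B' ^ (n+2) := by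
      rw [g4, f3]
      have hanx := ha (n+2) (by omega)
      push_cast
      linarith
    have hB0 : (0:ℝ) < B := by
      have := u_lt_v hξ hε0 hε1 ha hL hM1 hM2 hT2 d (n+1)
      have : (T:ℝ) ≤ u ξ a T d (n+1) := g1
      linarith [u_lt_v hξ hε0 hε1 ha hL hM1 hM2 hT2 d (n+1)]
    have hBB : B < B' := by
      have hpow : B ^ (n+2) < B' ^ (n+2) := by
        have : ξ * B ^ (n+2) < ξ * B' ^ (n+2) := by linarith [hε1]
        exact lt_of_mul_lt_mul_left this hξ.le
      by_contra hcon
      push_neg at hcon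
      have : (0:ℝ) ≤ B' := le_trans hT0.le f1
      exact absurd (pow_le_pow_left₀ this hcon (n+2)) (not_le.2 hpow)
    have hBTL : B' ≤ (T:ℝ) + L := by
      have := u_lt_v hξ hε0 hε1 ha hL hM1 hM2 hT2 d' (n+1)
      linarith
    have hchord := pow_sub_pow_le (le_trans hT0.le (le_trans g1 (u_lt_v hξ hε0 hε1 ha hL hM1 hM2 hT2 d (n+1)).le) : (0:ℝ) ≤ B) hBB.le hBTL (n+1)
    -- ξ (n+2) (T+L)^(n+1) (B' - B) ≥ 1 - ε
    have hTL0 : (0:ℝ) < (T:ℝ) + L := by positivity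
    have hden : (0:ℝ) < ξ * (n+2) * ((T:ℝ) + L) ^ (n+1) := by positivity
    have hmain : 1 - ε ≤ ξ * (n+2) * ((T:ℝ) + L) ^ (n+1) * (B' - B) := by
      have h5 : ξ * (B' ^ (n+2) - B ^ (n+2)) ≥ 1 - ε := by linarith
      have h6 : ξ * (B' ^ (n+2) - B ^ (n+2)) ≤ ξ * ((n+2) * ((T:ℝ)+L) ^ (n+1) * (B' - B)) := by
        apply mul_le_mul_of_nonneg_left _ hξ.le
        have := hchord
        push_cast at this ⊢
        linarith
      calc (1:ℝ) - ε ≤ ξ * (B' ^ (n+2) - B ^ (n+2)) := h5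
        _ ≤ ξ * ((n+2) * ((T:ℝ)+L) ^ (n+1) * (B' - B)) := h6
        _ = ξ * (n+2) * ((T:ℝ) + L) ^ (n+1) * (B' - B) := by ring
    have hd : afun ξ a T d ≤ B := (afun_mem hξ hε0 hε1 ha hL hM1 hM2 hT2 d (n+1)).2
    have hd' : B' ≤ afun ξ a T d' := (afun_mem hξ hε0 hε1 ha hL hM1 hM2 hT2 d' (n+1)).1
    rw [div_le_iff₀ hden]
    nlinarith
  rcases lt_or_gt_of_ne hkdiff with hlt | hgt
  · have := onesided c c' hlt
    rw [abs_sub_comm]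
    rw [abs_of_nonneg (by linarith [div_nonneg (by linarith : (0:ℝ) ≤ 1 - ε) (by positivity : (0:ℝ) ≤ ξ * (n+2) * ((T:ℝ) + L) ^ (n+1))])]
    linarith
  · have := onesided c' c hgt
    rw [abs_of_nonneg (by linarith [div_nonneg (by linarith : (0:ℝ) ≤ 1 - ε) (by positivity : (0:ℝ) ≤ ξ * (n+2) * ((T:ℝ) + L) ^ (n+1))])]
    linarith

lemma afun_injective : Function.Injective (afun ξ a T (M := M)) := by
  intro c c' hcc
  by_contra hne
  obtain ⟨n, hn⟩ : ∃ n, c n ≠ c' n := Function.ne_iff.1 hne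
  classical
  have hwf : ∃ n, c n ≠ c' n := ⟨n, hn⟩
  set n0 := Nat.find hwf with hn0
  have h1 : ∀ m < n0, c m = c' m := fun m hm => by
    by_contra hc; exact absurd hc (by simpa using Nat.find_min hwf hm)
  have h2 : c n0 ≠ c' n0 := Nat.find_spec hwf
  have := separation hξ hε0 hε1 ha hL hM1 hM2 hT2 c c' n0 h1 h2
  rw [hcc] at this
  simp at this
  have hden : (0:ℝ) < ξ * (n0+2) * ((T:ℝ) + L) ^ (n0+1) := by
    have : (0:ℝ) < T := by positivity
    positivity
  rw [div_le_iff₀ hden] at this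
  nlinarith

end Main2

end Stmt6Aux

namespace Stmt6Aux

section Val

variable {M : ℕ}

noncomputable def val (M : ℕ) (c : ℕ → Fin M) : ℝ :=
  ∑' n : ℕ, (c n : ℝ) * ((M:ℝ))⁻¹ ^ (n+1)

variable (hM2 : 2 ≤ M)
include hM2

lemma qfacts : (0:ℝ) < ((M:ℝ))⁻¹ ∧ ((M:ℝ))⁻¹ ≤ 1/2 ∧ (0:ℝ) < (M:ℝ) := by
  have h2M : (2:ℝ) ≤ (M:ℝ) := by exact_mod_cast hM2
  have hM0 : (0:ℝ) < (M:ℝ) := by linarith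
  refine ⟨by positivity, ?_, hM0⟩
  rw [inv_le_comm₀ hM0 (by norm_num)]
  linarith

lemma val_summable (c : ℕ → Fin M) : Summable (fun n : ℕ => (c n : ℝ) * ((M:ℝ))⁻¹ ^ (n+1)) := by
  obtain ⟨hq0, hq1, hM0⟩ := qfacts hM2
  refine Summable.of_nonneg_of_le (fun n => by positivity) (fun n => ?_)
    (summable_geometric_of_lt_one hq0.le (by linarith) : Summable fun n : ℕ => ((M:ℝ))⁻¹ ^ n)
  have hcn : ((c n : ℕ) : ℝ) ≤ (M:ℝ) := by
    exact_mod_cast (le_of_lt (c n).isLt)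
  calc ((c n : ℕ) : ℝ) * ((M:ℝ))⁻¹ ^ (n+1) ≤ (M:ℝ) * ((M:ℝ))⁻¹ ^ (n+1) := by
        apply mul_le_mul_of_nonneg_right hcn (by positivity)
    _ = ((M:ℝ))⁻¹ ^ n := by
        rw [pow_succ]
        field_simp

/-- if two digit strings agree below `n`, their values differ by at most `2 q^n`. -/
lemma val_close (c c' : ℕ → Fin M) (n : ℕ) (h : ∀ m < n, c m = c' m) :
    |val M c - val M c'| ≤ 2 * ((M:ℝ))⁻¹ ^ n := by
  obtain ⟨hq0, hq12, hM0⟩ := qfacts hM2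
  set q := ((M:ℝ))⁻¹ with hq
  have hq1 : q < 1 := by linarith
  have hsum := val_summable hM2 c
  have hsum' := val_summable hM2 c'
  have hdiff : Summable (fun m : ℕ => ((c m : ℝ) - (c' m : ℝ)) * q ^ (m+1)) := by
    have := hsum.sub hsum'
    exact this.congr fun m => by rw [hq]; ring
  have hveq : val M c - val M c' = ∑' m : ℕ, ((c m : ℝ) - (c' m : ℝ)) * q ^ (m+1) := by
    rw [val, val, ← Summable.tsum_sub hsum hsum']
    congr 1 with m
    ring
  rw [hveq]
  have habs_sum : Summable (fun m : ℕ => |((c m : ℝ) - (c' m : ℝ)) * q ^ (m+1)|) := hdiff.abs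
  have habs : |∑' m : ℕ, ((c m : ℝ) - (c' m : ℝ)) * q ^ (m+1)|
      ≤ ∑' m : ℕ, |((c m : ℝ) - (c' m : ℝ)) * q ^ (m+1)| := by
    have := norm_tsum_le_tsum_norm (f := fun m : ℕ => ((c m : ℝ) - (c' m : ℝ)) * q ^ (m+1))
      (by simpa only [Real.norm_eq_abs] using habs_sum)
    simpa only [Real.norm_eq_abs] using this
  have hsplit := Summable.sum_add_tsum_nat_add n habs_sum
  have hzero_sum : ∑ m ∈ Finset.range n, |((c m : ℝ) - (c' m : ℝ)) * q ^ (m+1)| = 0 :=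
    Finset.sum_eq_zero fun m hm => by
      rw [h m (Finset.mem_range.1 hm)]; simp
  have hbound : ∀ m : ℕ, |((c (m+n) : ℝ) - (c' (m+n) : ℝ)) * q ^ ((m+n)+1)|
      ≤ (M:ℝ) * q ^ (n+1) * q ^ m := by
    intro m
    have h1 : |((c (m+n) : ℝ) - (c' (m+n) : ℝ))| ≤ (M:ℝ) := by
      have hc1 : ((c (m+n) : ℕ) : ℝ) ≤ (M:ℝ) := by exact_mod_cast (le_of_lt (c (m+n)).isLt)
      have hc2 : ((c' (m+n) : ℕ) : ℝ) ≤ (M:ℝ) := by exact_mod_cast (le_of_lt (c' (m+n)).isLt)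
      have hd1 : (0:ℝ) ≤ ((c (m+n) : ℕ) : ℝ) := Nat.cast_nonneg _
      have hd2 : (0:ℝ) ≤ ((c' (m+n) : ℕ) : ℝ) := Nat.cast_nonneg _
      rw [abs_le]
      constructor <;> nlinarith
    rw [abs_mul, abs_pow, abs_of_nonneg hq0.le]
    calc |(c (m+n) : ℝ) - (c' (m+n) : ℝ)| * q ^ (m+n+1)
        ≤ (M:ℝ) * q ^ (m+n+1) := mul_le_mul_of_nonneg_right h1 (by positivity)
      _ = (M:ℝ) * q ^ (n+1) * q ^ m := by
          rw [show m+n+1 = (n+1)+m by omega, pow_add]; ring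
  have htail : ∑' m : ℕ, |((c (m+n) : ℝ) - (c' (m+n) : ℝ)) * q ^ ((m+n)+1)|
      ≤ ∑' m : ℕ, (M:ℝ) * q ^ (n+1) * q ^ m := by
    apply Summable.tsum_le_tsum hbound
    · exact (summable_nat_add_iff n).2 habs_sum
    · exact (summable_geometric_of_lt_one hq0.le hq1).mul_left _
  have hgeo : ∑' m : ℕ, (M:ℝ) * q ^ (n+1) * q ^ m = (M:ℝ) * q ^ (n+1) * (1 - q)⁻¹ := by
    rw [tsum_mul_left, tsum_geometric_of_lt_one hq0.le hq1]
  have hMq : (M:ℝ) * q = 1 := by rw [hq]; field_simp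
  have hinv2 : (1 - q)⁻¹ ≤ 2 := by
    rw [inv_le_comm₀ (by linarith) (by norm_num)]
    linarith
  have hfinal : (M:ℝ) * q ^ (n+1) * (1 - q)⁻¹ ≤ 2 * q ^ n := by
    have hrw : (M:ℝ) * q ^ (n+1) = q ^ n := by
      rw [pow_succ]
      calc (M:ℝ) * (q ^ n * q) = ((M:ℝ) * q) * q ^ n := by ring
        _ = q ^ n := by rw [hMq]; ring
    rw [hrw]
    have hqn : (0:ℝ) ≤ q ^ n := by positivity
    calc q ^ n * (1 - q)⁻¹ ≤ q ^ n * 2 := mul_le_mul_of_nonneg_left hinv2 hqn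
      _ = 2 * q ^ n := by ring
  calc |∑' m : ℕ, ((c m : ℝ) - (c' m : ℝ)) * q ^ (m+1)|
      ≤ ∑' m : ℕ, |((c m : ℝ) - (c' m : ℝ)) * q ^ (m+1)| := habs
    _ = ∑ m ∈ Finset.range n, |((c m : ℝ) - (c' m : ℝ)) * q ^ (m+1)|
        + ∑' m : ℕ, |((c (m+n) : ℝ) - (c' (m+n) : ℝ)) * q ^ ((m+n)+1)| := hsplit.symm
    _ ≤ 0 + (M:ℝ) * q ^ (n+1) * (1 - q)⁻¹ := by
        rw [hzero_sum]
        exact add_le_add_right (htail.trans hgeo.le) 0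
    _ ≤ 2 * q ^ n := by rw [zero_add]; exact hfinal

end Val

end Stmt6Aux

namespace Stmt6Aux

section Expand

variable {M : ℕ} (hM2 : 2 ≤ M)
include hM2

lemma exists_digits {x : ℝ} (hx : x ∈ Set.Icc (0:ℝ) 1) : ∃ c : ℕ → Fin M, val M c = x := by
  obtain ⟨hq0, hq12, hM0⟩ := qfacts hM2
  set q := ((M:ℝ))⁻¹ with hq
  have hq1 : q < 1 := by linarith
  have hMq : (M:ℝ) * q = 1 := by rw [hq]; field_simp
  obtain ⟨hx0, hx1⟩ := hx
  rcases eq_or_lt_of_le hx1 with h1 | h1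
  · -- x = 1 : take all digits M - 1
    refine ⟨fun _ => ⟨M - 1, by omega⟩, ?_⟩
    have hcast : ((M - 1 : ℕ) : ℝ) = (M:ℝ) - 1 := by
      have : (1:ℕ) ≤ M := by omega
      push_cast [this]
      ring
    rw [val]
    have : ∀ n : ℕ, (((⟨M - 1, by omega⟩ : Fin M) : ℕ) : ℝ) * q ^ (n+1)
        = ((M:ℝ) - 1) * q * q ^ n := by
      intro n
      rw [pow_succ]
      simp [hcast]
      ring
    rw [tsum_congr this, tsum_mul_left, tsum_geometric_of_lt_one hq0.le hq1, h1]
    have h1q : 1 - q ≠ 0 := by linarith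
    rw [show ((M:ℝ) - 1) * q * (1 - q)⁻¹ = (1 - q) * (1 - q)⁻¹ from by
      rw [sub_mul, hMq, one_mul], mul_inv_cancel₀ h1q]
  · -- x < 1 : standard base-M digits
    set d : ℕ → ℤ := fun n => ⌊x * (M:ℝ) ^ (n+1)⌋ - M * ⌊x * (M:ℝ) ^ n⌋ with hd
    have hdbound : ∀ n, 0 ≤ d n ∧ d n < M := by
      intro n
      have hy : (0:ℝ) ≤ x * (M:ℝ) ^ n := by positivity
      have e1 : x * (M:ℝ) ^ (n+1) = (M:ℝ) * (x * (M:ℝ) ^ n) := by ring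
      constructor
      · have : (M:ℤ) * ⌊x * (M:ℝ) ^ n⌋ ≤ ⌊x * (M:ℝ) ^ (n+1)⌋ := by
          rw [Int.le_floor]
          push_cast
          rw [e1]
          have := Int.floor_le (x * (M:ℝ) ^ n)
          nlinarith
        show 0 ≤ ⌊x * (M:ℝ) ^ (n+1)⌋ - (M:ℤ) * ⌊x * (M:ℝ) ^ n⌋
        omega
      · have : ⌊x * (M:ℝ) ^ (n+1)⌋ < (M:ℤ) * ⌊x * (M:ℝ) ^ n⌋ + M := by
          rw [Int.floor_lt]
          push_cast
          rw [e1]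
          have := Int.lt_floor_add_one (x * (M:ℝ) ^ n)
          nlinarith
        show ⌊x * (M:ℝ) ^ (n+1)⌋ - (M:ℤ) * ⌊x * (M:ℝ) ^ n⌋ < (M:ℤ)
        omega
    set c : ℕ → Fin M := fun n => ⟨(d n).toNat, by
      have := hdbound n
      omega⟩ with hc
    have hcd : ∀ n, ((c n : ℕ) : ℝ) = ((d n : ℤ) : ℝ) := by
      intro n
      have h2 := Int.toNat_of_nonneg (hdbound n).1
      show (((d n).toNat : ℕ) : ℝ) = ((d n : ℤ) : ℝ)
      exact_mod_cast h2
    refine ⟨c, ?_⟩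
    -- partial sums telescope
    have hpartial : ∀ N : ℕ, ∑ n ∈ Finset.range N, ((c n : ℕ) : ℝ) * q ^ (n+1)
        = (⌊x * (M:ℝ) ^ N⌋ : ℝ) * q ^ N := by
      intro N
      induction N with
      | zero =>
        simp
        rw [show ⌊x⌋ = 0 from Int.floor_eq_zero_iff.2 ⟨hx0, h1⟩]
        simp
      | succ N ih =>
        rw [Finset.sum_range_succ, ih, hcd N, hd]
        push_cast
        have hqM : (M:ℝ) * q ^ (N+1) = q ^ N := by
          rw [pow_succ]
          calc (M:ℝ) * (q ^ N * q) = ((M:ℝ) * q) * q ^ N := by ring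
            _ = q ^ N := by rw [hMq]; ring
        have expand : ((⌊x * (M:ℝ) ^ (N+1)⌋ : ℝ) - (M:ℝ) * (⌊x * (M:ℝ) ^ N⌋ : ℝ)) * q ^ (N+1)
            = (⌊x * (M:ℝ) ^ (N+1)⌋ : ℝ) * q ^ (N+1)
              - (⌊x * (M:ℝ) ^ N⌋ : ℝ) * ((M:ℝ) * q ^ (N+1)) := by ring
        rw [expand, hqM]
        ring
    -- partial sums converge to x
    have hqMpow : ∀ N : ℕ, q ^ N * (M:ℝ) ^ N = 1 := by
      intro N
      rw [← mul_pow]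
      rw [show q * (M:ℝ) = 1 by rw [mul_comm]; exact hMq]
      simp
    have hclose : ∀ N : ℕ, |x - ∑ n ∈ Finset.range N, ((c n : ℕ) : ℝ) * q ^ (n+1)| ≤ q ^ N := by
      intro N
      rw [hpartial N]
      have hfl := Int.floor_le (x * (M:ℝ) ^ N)
      have hfl2 := Int.lt_floor_add_one (x * (M:ℝ) ^ N)
      have hqN : (0:ℝ) < q ^ N := by positivity
      have hMN : (0:ℝ) < (M:ℝ) ^ N := by positivity
      rw [abs_le]
      constructor
      · have : (⌊x * (M:ℝ) ^ N⌋ : ℝ) * q ^ N ≤ (x * (M:ℝ) ^ N) * q ^ N :=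
          mul_le_mul_of_nonneg_right hfl hqN.le
        have hxq : (x * (M:ℝ) ^ N) * q ^ N = x := by
          calc (x * (M:ℝ) ^ N) * q ^ N = x * (q ^ N * (M:ℝ) ^ N) := by ring
            _ = x := by rw [hqMpow]; ring
        nlinarith
      · have : (x * (M:ℝ) ^ N) * q ^ N < ((⌊x * (M:ℝ) ^ N⌋ : ℝ) + 1) * q ^ N :=
          mul_lt_mul_of_pos_right hfl2 hqN
        have hxq : (x * (M:ℝ) ^ N) * q ^ N = x := by
          calc (x * (M:ℝ) ^ N) * q ^ N = x * (q ^ N * (M:ℝ) ^ N) := by ring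
            _ = x := by rw [hqMpow]; ring
        nlinarith
    have hsummable := val_summable hM2 c
    have htends : Filter.Tendsto (fun N => ∑ n ∈ Finset.range N, ((c n : ℕ) : ℝ) * q ^ (n+1))
        Filter.atTop (nhds x) := by
      rw [tendsto_iff_dist_tendsto_zero]
      apply squeeze_zero (fun N => dist_nonneg) (fun N => ?_)
        (tendsto_pow_atTop_nhds_zero_of_lt_one hq0.le hq1)
      rw [Real.dist_eq, abs_sub_comm]
      exact hclose N
    have := hsummable.hasSum.tendsto_sum_nat
    exact tendsto_nhds_unique this htends

end Expand

end Stmt6Aux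

namespace Stmt6Aux

section Holder

variable {M : ℕ} {ξ ε : ℝ} {a : ℕ → ℝ} {T L : ℕ} {r : ℝ}

variable (hξ : 0 < ξ) (hε0 : 0 < ε) (hε1 : ε < 1)
  (ha : ∀ n : ℕ, 1 ≤ n → 0 ≤ a n ∧ a n < 1 - ε)
  (hL : 2 ≤ ξ * L) (hM1 : (M:ℝ) + 1 ≤ ε * T) (hM2 : 2 ≤ M) (hT2 : 2 ≤ T)
  (hr0 : 0 < r) (hr1 : r ≤ 1) (hBr : (2 * ((T:ℝ) + L)) ^ r ≤ M)

include hξ hε0 hε1 ha hL hM1 hM2 hT2 hr0 hr1 hBr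

lemma holder_key (c c' : ℕ → Fin M) :
    |val M c - val M c'| ≤ (2 * (M:ℝ)^2 * max 1 (ξ / (1 - ε)))
      * |afun ξ a T c - afun ξ a T c'| ^ r := by
  rcases eq_or_ne c c' with rfl | hne
  · simp only [sub_self, abs_zero]
    have : (0:ℝ) ^ r = 0 := Real.zero_rpow hr0.ne'
    rw [this, mul_zero]
  classical
  have hex : ∃ n, c n ≠ c' n := Function.ne_iff.1 hne
  set n0 := Nat.find hex with hn0
  have hlow : ∀ m < n0, c m = c' m := fun m hm => by
    by_contra hcon; exact absurd hcon (by simpa using Nat.find_min hex hm)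
  have hneq : c n0 ≠ c' n0 := Nat.find_spec hex
  -- LHS bound
  have hLHS := val_close hM2 c c' n0 hlow
  -- separation
  have hsep := separation hξ hε0 hε1 ha hL hM1 hM2 hT2 c c' n0 hlow hneq
  set D := |afun ξ a T c - afun ξ a T c'| with hD
  set δ := (1 - ε) / (ξ * (n0+2) * ((T:ℝ) + L) ^ (n0+1)) with hδ
  have hT0 : (0:ℝ) < T := by positivity
  have hTL1 : (1:ℝ) ≤ (T:ℝ) + L := by
    have : (2:ℝ) ≤ (T:ℝ) := by exact_mod_cast hT2
    have : (0:ℝ) ≤ (L:ℝ) := by positivity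
    linarith
  have hδpos : 0 < δ := by
    rw [hδ]
    apply div_pos (by linarith)
    positivity
  set B := 2 * ((T:ℝ) + L) with hBdef
  have hB1 : (1:ℝ) ≤ B := by rw [hBdef]; linarith
  have hM0 : (0:ℝ) < (M:ℝ) := by
    have : (2:ℝ) ≤ (M:ℝ) := by exact_mod_cast hM2
    linarith
  -- δ ≥ ((1-ε)/ξ) * (B^(n0+2))⁻¹
  have hδlow : ((1 - ε) / ξ) * (B ^ (n0+2))⁻¹ ≤ δ := by
    have hkey : (((n0:ℝ)+2) * ((T:ℝ)+L) ^ (n0+1)) ≤ B ^ (n0+2) := by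
      have h2p : ((n0:ℝ)+2) ≤ 2 ^ (n0+2) := by
        have := Nat.lt_two_pow_self (n := n0+2)
        have h' : ((n0+2 : ℕ) : ℝ) ≤ ((2 ^ (n0+2) : ℕ) : ℝ) := by exact_mod_cast this.le
        push_cast at h'
        linarith
      have hTLpow : ((T:ℝ)+L) ^ (n0+1) ≤ ((T:ℝ)+L) ^ (n0+2) :=
        pow_le_pow_right₀ hTL1 (by omega)
      calc ((n0:ℝ)+2) * ((T:ℝ)+L) ^ (n0+1)
          ≤ 2 ^ (n0+2) * ((T:ℝ)+L) ^ (n0+2) := by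
            apply mul_le_mul h2p hTLpow (by positivity) (by positivity)
        _ = B ^ (n0+2) := by rw [hBdef, mul_pow]
    rw [hδ, div_eq_mul_inv, div_eq_mul_inv, mul_assoc]
    apply mul_le_mul_of_nonneg_left _ (by linarith : (0:ℝ) ≤ 1 - ε)
    rw [← mul_inv]
    apply inv_anti₀ (by positivity)
    calc ξ * (B ^ (n0+2)) ≥ ξ * (((n0:ℝ)+2) * ((T:ℝ)+L) ^ (n0+1)) := by
          apply mul_le_mul_of_nonneg_left hkey hξ.le
      _ = ξ * ((n0:ℝ)+2) * ((T:ℝ)+L) ^ (n0+1) := by ring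
  -- rpow manipulations
  have hδr : δ ^ r ≤ D ^ r := Real.rpow_le_rpow hδpos.le hsep hr0.le
  have hB0 : (0:ℝ) < B := by linarith
  set w := (1 - ε) / ξ with hw
  have hw0 : (0:ℝ) < w := by rw [hw]; exact div_pos (by linarith) hξ
  have hsplit : (w * (B ^ (n0+2))⁻¹) ^ r = w ^ r * ((B ^ (n0+2))⁻¹) ^ r :=
    Real.mul_rpow hw0.le (by positivity)
  have e1 : ((B ^ (n0+2) : ℝ)) ^ r = (B ^ r) ^ (n0+2) := by
    rw [← Real.rpow_natCast B (n0+2), ← Real.rpow_mul hB0.le, mul_comm (((n0+2 : ℕ)):ℝ) r,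
      Real.rpow_mul hB0.le, Real.rpow_natCast]
  have hBpow : ((M:ℝ) ^ (n0+2))⁻¹ ≤ ((B ^ (n0+2))⁻¹) ^ r := by
    rw [Real.inv_rpow (by positivity), e1]
    apply inv_anti₀ (by positivity)
    exact pow_le_pow_left₀ (Real.rpow_nonneg hB0.le r) hBr (n0+2)
  set mx := max 1 (ξ / (1 - ε)) with hmx
  have hmx1 : (1:ℝ) ≤ mx := le_max_left _ _
  have hwr : (1:ℝ) ≤ mx * w ^ r := by
    rcases le_total 1 w with h | h
    · have h1 : (1:ℝ) ≤ w ^ r := by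
        have := Real.rpow_le_rpow (by norm_num) h hr0.le
        rwa [Real.one_rpow] at this
      nlinarith
    · have h1 : w ^ (1:ℝ) ≤ w ^ r := Real.rpow_le_rpow_of_exponent_ge hw0 h hr1
      rw [Real.rpow_one] at h1
      have h2 : w⁻¹ ≤ mx := by
        have hinv : w⁻¹ = ξ / (1 - ε) := by
          rw [hw, inv_div]
        rw [hinv, hmx]
        exact le_max_right _ _
      calc (1:ℝ) = w⁻¹ * w := (inv_mul_cancel₀ hw0.ne').symm
        _ ≤ mx * w ^ r := by
            apply mul_le_mul h2 h1 hw0.le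
            exact le_trans (by positivity) h2
  have hDr : w ^ r * ((M:ℝ) ^ (n0+2))⁻¹ ≤ D ^ r := by
    calc w ^ r * ((M:ℝ) ^ (n0+2))⁻¹
        ≤ w ^ r * ((B ^ (n0+2))⁻¹) ^ r :=
          mul_le_mul_of_nonneg_left hBpow (Real.rpow_nonneg hw0.le r)
      _ = (w * (B ^ (n0+2))⁻¹) ^ r := hsplit.symm
      _ ≤ δ ^ r := Real.rpow_le_rpow (by positivity) hδlow hr0.le
      _ ≤ D ^ r := hδr
  have step1 : 2 * ((M:ℝ)⁻¹) ^ n0 = 2 * (M:ℝ) ^ 2 * ((M:ℝ) ^ (n0+2))⁻¹ := by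
    have hp : (M:ℝ) ^ (n0+2) = (M:ℝ) ^ n0 * (M:ℝ) ^ 2 := by rw [pow_add]
    rw [inv_pow, hp]
    have h1 : (M:ℝ) ^ n0 ≠ 0 := by positivity
    have h2 : (M:ℝ) ^ 2 ≠ 0 := by positivity
    field_simp
  calc |val M c - val M c'| ≤ 2 * ((M:ℝ)⁻¹) ^ n0 := hLHS
    _ = 2 * (M:ℝ) ^ 2 * ((M:ℝ) ^ (n0+2))⁻¹ := step1
    _ ≤ 2 * (M:ℝ) ^ 2 * ((M:ℝ) ^ (n0+2))⁻¹ * (mx * w ^ r) := by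
        apply le_mul_of_one_le_right (by positivity) hwr
    _ = 2 * (M:ℝ) ^ 2 * mx * (w ^ r * ((M:ℝ) ^ (n0+2))⁻¹) := by ring
    _ ≤ 2 * (M:ℝ) ^ 2 * mx * D ^ r := by
        apply mul_le_mul_of_nonneg_left hDr
        positivity

end Holder

end Stmt6Aux

namespace Stmt6Aux

open ENNReal NNReal

lemma dim_lower {ξ ε : ℝ} {a : ℕ → ℝ} (hξ : 0 < ξ) (hε0 : 0 < ε) (hε1 : ε < 1)
    (ha : ∀ n : ℕ, 1 ≤ n → 0 ≤ a n ∧ a n < 1 - ε)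
    (r : ℝ≥0) (hr0 : 0 < r) (hr1 : (r:ℝ) ≤ 1)
    (T L M : ℕ) (hL : 2 ≤ ξ * L) (hM1 : (M:ℝ) + 1 ≤ ε * T) (hM2 : 2 ≤ M) (hT2 : 2 ≤ T)
    (hBr : (2 * ((T:ℝ) + L)) ^ (r:ℝ) ≤ M) :
    (r : ℝ≥0∞) ≤ dimH {α : ℝ | 1 < α ∧ ∀ n : ℕ, 1 ≤ n →
      a n ≤ Int.fract (ξ * α ^ n) ∧ Int.fract (ξ * α ^ n) ≤ a n + ε} := by
  classical
  haveI : Nonempty (Fin M) := ⟨⟨0, by omega⟩⟩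
  have hr0' : (0:ℝ) < (r:ℝ) := hr0
  set A : (ℕ → Fin M) → ℝ := afun ξ a T with hA
  have hinj : Function.Injective A := afun_injective hξ hε0 hε1 ha hL hM1 hM2 hT2
  set E := Set.range A with hE
  set g : ℝ → ℝ := fun x => val M (Function.invFun A x) with hg
  have hgA : ∀ c, g (A c) = val M c := fun c => by
    rw [hg]
    simp only
    rw [Function.leftInverse_invFun hinj c]
  have hES : E ⊆ {α : ℝ | 1 < α ∧ ∀ n : ℕ, 1 ≤ n →
      a n ≤ Int.fract (ξ * α ^ n) ∧ Int.fract (ξ * α ^ n) ≤ a n + ε} := by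
    rintro x ⟨c, rfl⟩
    exact afun_in_set hξ hε0 hε1 ha hL hM1 hM2 hT2 c
  set Cr : ℝ := 2 * (M:ℝ)^2 * max 1 (ξ / (1 - ε)) with hCr
  have hmax0 : (0:ℝ) ≤ max 1 (ξ / (1 - ε)) := le_trans zero_le_one (le_max_left _ _)
  have hCr0 : 0 ≤ Cr := by
    rw [hCr]
    have : (0:ℝ) ≤ 2 * (M:ℝ)^2 := by positivity
    exact mul_nonneg this hmax0
  have hHolder : HolderOnWith Cr.toNNReal r g E := by
    rintro x ⟨c, rfl⟩ y ⟨c', rfl⟩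
    rw [edist_dist, edist_dist]
    have hreal : dist (g (A c)) (g (A c')) ≤ Cr * dist (A c) (A c') ^ (r:ℝ) := by
      rw [hgA, hgA, Real.dist_eq, Real.dist_eq]
      exact holder_key hξ hε0 hε1 ha hL hM1 hM2 hT2 hr0' hr1 hBr c c'
    calc ENNReal.ofReal (dist (g (A c)) (g (A c')))
        ≤ ENNReal.ofReal (Cr * dist (A c) (A c') ^ (r:ℝ)) := ENNReal.ofReal_le_ofReal hreal
      _ = ENNReal.ofReal Cr * ENNReal.ofReal (dist (A c) (A c') ^ (r:ℝ)) :=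
          ENNReal.ofReal_mul hCr0
      _ = ↑Cr.toNNReal * ENNReal.ofReal (dist (A c) (A c')) ^ (r:ℝ) := by
          rw [← ENNReal.ofReal_rpow_of_nonneg dist_nonneg hr0'.le]
          rfl
  have himg : Set.Icc (0:ℝ) 1 ⊆ g '' E := by
    intro x hx
    obtain ⟨c, hc⟩ := exists_digits hM2 hx
    exact ⟨A c, ⟨c, rfl⟩, by rw [hgA]; exact hc⟩
  have h1 : (1:ℝ≥0∞) = dimH (Set.Icc (0:ℝ) 1) := by
    rw [Real.dimH_of_mem_nhds (x := (1/2:ℝ)) (Icc_mem_nhds (by norm_num) (by norm_num))]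
    simp
  have h3 : dimH (g '' E) ≤ dimH E / r := hHolder.dimH_image_le hr0
  have h4 : (1:ℝ≥0∞) ≤ dimH E / r := by
    rw [h1]
    exact (dimH_mono himg).trans h3
  have h5 : (r : ℝ≥0∞) ≤ dimH E := by
    rw [ENNReal.le_div_iff_mul_le (Or.inl (by exact_mod_cast hr0.ne'))
      (Or.inl ENNReal.coe_ne_top)] at h4
    simpa using h4
  exact h5.trans (dimH_mono hES)

end Stmt6Aux

open Stmt6Aux in
theorem stmt_6 (ξ ε : ℝ) (hξ : 0 < ξ) (hε0 : 0 < ε) (hε1 : ε < 1)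
    (a : ℕ → ℝ) (ha : ∀ n : ℕ, 1 ≤ n → 0 ≤ a n ∧ a n < 1 - ε) :
    dimH {α : ℝ | 1 < α ∧ ∀ n : ℕ, 1 ≤ n →
      a n ≤ Int.fract (ξ * α ^ n) ∧ Int.fract (ξ * α ^ n) ≤ a n + ε} = 1 := by
  apply le_antisymm
  · exact (dimH_mono (Set.subset_univ _)).trans_eq Real.dimH_univ
  · apply ENNReal.le_of_forall_nnreal_lt
    intro p hp
    rcases eq_or_lt_of_le (zero_le : 0 ≤ p) with h0 | h0
    · rw [← h0]; simp
    have hp1 : (p:ℝ) < 1 := by exact_mod_cast hp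
    have hp0 : (0:ℝ) < (p:ℝ) := h0
    set rr : ℝ := (p:ℝ) with hrr
    set L : ℕ := ⌈2/ξ⌉₊ with hLdef
    have hL : 2 ≤ ξ * L := by
      have h1 : (2/ξ : ℝ) ≤ (L:ℝ) := Nat.le_ceil _
      rw [div_le_iff₀ hξ] at h1
      linarith
    have hrr1 : (0:ℝ) < 1 - rr := by linarith
    set T0 : ℝ := (7/ε) ^ ((1-rr)⁻¹) with hT0def
    set T : ℕ := max (max L 2) ⌈T0⌉₊ with hTdef
    have hT2 : 2 ≤ T := le_trans (le_max_right L 2) (le_max_left _ _)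
    have hLT : L ≤ T := le_trans (le_max_left L 2) (le_max_left _ _)
    have hTT0 : T0 ≤ (T:ℝ) := le_trans (Nat.le_ceil T0) (Nat.cast_le.2 (le_max_right _ _))
    have hT1 : (1:ℝ) ≤ (T:ℝ) := by
      have : (2:ℝ) ≤ (T:ℝ) := by exact_mod_cast hT2
      linarith
    have hTpos : (0:ℝ) < (T:ℝ) := by linarith
    have hT0pos : 0 < T0 := Real.rpow_pos_of_pos (by positivity) _
    have key : 7 * (T:ℝ) ^ rr ≤ ε * T := by
      have h1 : (7/ε) ≤ (T:ℝ) ^ (1 - rr) := by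
        calc (7/ε : ℝ) = T0 ^ (1-rr) := by
              rw [hT0def, ← Real.rpow_mul (by positivity), inv_mul_cancel₀ hrr1.ne',
                Real.rpow_one]
          _ ≤ (T:ℝ) ^ (1-rr) := Real.rpow_le_rpow hT0pos.le hTT0 (by linarith)
      have h2 : (T:ℝ)^(1-rr) * (T:ℝ)^rr = (T:ℝ) := by
        rw [← Real.rpow_add hTpos]
        norm_num
      calc 7 * (T:ℝ)^rr = ε * ((7/ε) * (T:ℝ)^rr) := by field_simp
        _ ≤ ε * ((T:ℝ)^(1-rr) * (T:ℝ)^rr) := by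
            apply mul_le_mul_of_nonneg_left _ hε0.le
            exact mul_le_mul_of_nonneg_right h1 (Real.rpow_nonneg hTpos.le _)
        _ = ε * T := by rw [h2]
    have hTr1 : (1:ℝ) ≤ (T:ℝ) ^ rr := by
      calc (1:ℝ) = 1 ^ rr := (Real.one_rpow rr).symm
        _ ≤ (T:ℝ)^rr := Real.rpow_le_rpow (by norm_num) hT1 hp0.le
    have hεT7 : (7:ℝ) ≤ ε * T := by nlinarith
    set M : ℕ := ⌊ε * (T:ℝ)⌋₊ - 2 with hMdef
    have hfloor_ge : 7 ≤ ⌊ε * (T:ℝ)⌋₊ := Nat.le_floor (by exact_mod_cast hεT7)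
    have hM2 : 2 ≤ M := by omega
    have hMreal : (M:ℝ) = (⌊ε * (T:ℝ)⌋₊ : ℝ) - 2 := by
      rw [hMdef]
      have h2f : (2:ℕ) ≤ ⌊ε * (T:ℝ)⌋₊ := by omega
      push_cast [h2f]
      ring
    have hfloor_le : ((⌊ε * (T:ℝ)⌋₊:ℕ):ℝ) ≤ ε*T := Nat.floor_le (by positivity)
    have hM1 : (M:ℝ) + 1 ≤ ε * T := by rw [hMreal]; linarith
    have hBr : (2 * ((T:ℝ) + L)) ^ rr ≤ (M:ℝ) := by
      have hfloor_gt : ε*(T:ℝ) < (⌊ε * (T:ℝ)⌋₊:ℝ) + 1 := Nat.lt_floor_add_one _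
      have hMlow : ε*T - 3 ≤ (M:ℝ) := by rw [hMreal]; linarith
      have hTL4 : 2 * ((T:ℝ) + L) ≤ 4 * T := by
        have : (L:ℝ) ≤ (T:ℝ) := by exact_mod_cast hLT
        linarith
      have h4r : (2 * ((T:ℝ)+L)) ^ rr ≤ (4*(T:ℝ)) ^ rr :=
        Real.rpow_le_rpow (by positivity) hTL4 hp0.le
      have h4r2 : (4*(T:ℝ)) ^ rr = 4 ^ rr * (T:ℝ)^rr := Real.mul_rpow (by norm_num) hTpos.le
      have h44 : (4:ℝ) ^ rr ≤ 4 := by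
        calc (4:ℝ)^rr ≤ 4 ^ (1:ℝ) := Real.rpow_le_rpow_of_exponent_le (by norm_num) hp1.le
          _ = 4 := Real.rpow_one 4
      calc (2*((T:ℝ)+L))^rr ≤ 4 ^ rr * (T:ℝ)^rr := by rw [← h4r2]; exact h4r
        _ ≤ 4 * (T:ℝ)^rr := mul_le_mul_of_nonneg_right h44 (Real.rpow_nonneg hTpos.le _)
        _ ≤ ε*T - 3 := by nlinarith
        _ ≤ (M:ℝ) := hMlow
    exact dim_lower hξ hε0 hε1 ha p h0 hp1.le T L M hL hM1 hM2 hT2 hBr
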